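/- Let (G,φ) be a weighted graph, let r > 0, and let m,N be positive integers. If the graph (G,φ)^r has an m-coloring with weak diameter in (G,φ)^r at most N, then there exist collections X_1,…,X_m of subsets of V(G) such that: (a) the union of all members of all the collections covers V(G); (b) for each i ∈ {1,…,m} and each X ∈ X_i, the weak diameter in (G,φ) of X is at most rN; and (c) for each i ∈ {1,…,m}, any distinct X,X' ∈ X_i, and any x ∈ X and x' ∈ X', d_{(G,φ)}(x,x') > r. -/

import Mathlib

open scoped ENNReal

/-- The length of a walk in an edge-weighted graph: the sum of the weights of its edges. -/
def walkLen {V : Type} {G : SimpleGraph V} (w : Sym2 V → ℝ) {x y : V} (p : G.Walk x y) : ℝ :=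
  (p.edges.map w).sum

/-- The distance between two vertices of an edge-weighted graph: the infimum of the lengths
of paths between them (`⊤` if there is no such path). -/
noncomputable def wDist {V : Type} (G : SimpleGraph V) (w : Sym2 V → ℝ) (x y : V) : ℝ≥0∞ :=
  ⨅ q : {q : G.Walk x y // q.IsPath}, ENNReal.ofReal (walkLen w q.1)

lemma wDist_comm {V : Type} (G : SimpleGraph V) (w : Sym2 V → ℝ) (x y : V) :
    wDist G w x y = wDist G w y x := by
  have key : ∀ a b : V, wDist G w a b ≤ wDist G w b a := by
    intro a b
    refine le_iInf fun q => ?_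
    refine iInf_le_of_le ⟨q.1.reverse, q.2.reverse⟩ ?_
    simp [walkLen, List.sum_reverse]
  exact le_antisymm (key x y) (key y x)

/-- The power graph: two distinct vertices are adjacent iff their weighted distance
is at most `r`. -/
noncomputable def powerGraph {V : Type} (G : SimpleGraph V) (w : Sym2 V → ℝ) (r : ℝ) :
    SimpleGraph V where
  Adj x y := x ≠ y ∧ wDist G w x y ≤ ENNReal.ofReal r
  symm := by
    constructor
    rintro x y ⟨hne, hle⟩
    exact ⟨hne.symm, by rwa [wDist_comm]⟩
  loopless := ⟨fun x h => h.1 rfl⟩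

/-- The unit-length (hop) distance in an unweighted graph. -/
noncomputable def hopDist {V : Type} (L : SimpleGraph V) (x y : V) : ℝ≥0∞ :=
  ⨅ q : L.Walk x y, (q.length : ℝ≥0∞)

/-- Same-colour adjacency within a vertex set `A`. -/
def colorGraph {V : Type} (K : SimpleGraph V) (A : Set V) {m : ℕ} (c : V → Fin m) :
    SimpleGraph V where
  Adj x y := K.Adj x y ∧ x ∈ A ∧ y ∈ A ∧ c x = c y
  symm := by
    constructor
    rintro x y ⟨h, hx, hy, hc⟩
    exact ⟨h.symm, hy, hx, hc.symm⟩
  loopless := ⟨fun x h => K.ne_of_adj h.1 rfl⟩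

/-- The colouring `c` of the subgraph of `K` induced on `A` has weak diameter, measured by the
hop distance of `L`, at most `N`: any two vertices of a monochromatic component of `K ↾ A` are
at hop distance at most `N` in `L`. -/
def HasWeakDiamLE {V : Type} (K : SimpleGraph V) (A : Set V) (L : SimpleGraph V) {m : ℕ}
    (c : V → Fin m) (N : ℝ) : Prop :=
  ∀ x ∈ A, ∀ y ∈ A, (colorGraph K A c).Reachable x y → hopDist L x y ≤ ENNReal.ofReal N

/-- `nbhd G w r S`: vertices joined to `S` by a path of weighted length at most `r`. -/
def nbhd {V : Type} (G : SimpleGraph V) (w : Sym2 V → ℝ) (r : ℝ) (S : Set V) : Set V :=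
  {v | ∃ s ∈ S, ∃ q : G.Walk v s, q.IsPath ∧ walkLen w q ≤ r}

/-- Deleting a set of vertices (keeping them as isolated vertices of the ambient type). -/
def delVerts {V : Type} (G : SimpleGraph V) (Z : Set V) : SimpleGraph V where
  Adj x y := G.Adj x y ∧ x ∉ Z ∧ y ∉ Z
  symm := by
    constructor
    rintro x y ⟨h, hx, hy⟩
    exact ⟨h.symm, hy, hx⟩
  loopless := ⟨fun x h => G.ne_of_adj h.1 rfl⟩

/-- A weighted graph: a finite simple graph together with positive edge weights. -/
structure WGraph : Type 1 where
  V : Type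
  fin : Finite V
  G : SimpleGraph V
  w : Sym2 V → ℝ
  pos : ∀ e ∈ G.edgeSet, 0 < w e

/-- The extended metric on the vertex set of a weighted graph. -/
noncomputable def WGraph.dist (W : WGraph) : W.V → W.V → ℝ≥0∞ := wDist W.G W.w

/-- All edge weights lie in `(0, ℓ]`. -/
def WGraph.IsBounded (W : WGraph) (ℓ : ℝ) : Prop := ∀ e ∈ W.G.edgeSet, W.w e ≤ ℓ

/-- `f` is an `n`-dimensional control function for the extended metric `d`. -/
def IsControlOn {X : Type} (d : X → X → ℝ≥0∞) (n : ℕ) (f : ℝ → ℝ) : Prop :=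
  ∀ r : ℝ, 0 < r → ∃ U : Fin (n + 1) → Set (Set X),
    (∀ x : X, ∃ i, ∃ s ∈ U i, x ∈ s) ∧
    (∀ i, ∀ s ∈ U i, ∀ t ∈ U i, s ≠ t → ∀ x ∈ s, ∀ y ∈ t, ENNReal.ofReal r < d x y) ∧
    (∀ i, ∀ s ∈ U i, ∀ x ∈ s, ∀ y ∈ s, d x y ≤ ENNReal.ofReal (f r))

/-- The asymptotic dimension of a class of weighted graphs is at most `n`. -/
def asdimLE (F : Set WGraph) (n : ℕ) : Prop :=
  ∃ f : ℝ → ℝ, (∀ x, 0 < x → 0 < f x) ∧ ∀ W ∈ F, IsControlOn W.dist n f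

/-- The Assouad–Nagata dimension of a class of weighted graphs is at most `n`:
some dilation is a common `n`-dimensional control function. -/
def ANdimLE (F : Set WGraph) (n : ℕ) : Prop :=
  ∃ (f : ℝ → ℝ) (c : ℝ), 0 < c ∧ (∀ x, 0 < x → 0 < f x) ∧ (∀ x, 0 < x → f x ≤ c * x) ∧
    ∀ W ∈ F, IsControlOn W.dist n f

/-- `H` is a minor of `G`: there are pairwise disjoint nonempty connected branch sets in `G`,
one for each vertex of `H`, with branch sets of adjacent vertices joined by an edge. -/
def IsMinorOf {α β : Type} (H : SimpleGraph β) (G : SimpleGraph α) : Prop :=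
  ∃ B : β → Set α,
    (∀ h, (B h).Nonempty) ∧
    (∀ h h', h ≠ h' → Disjoint (B h) (B h')) ∧
    (∀ h, (G.induce (B h)).Connected) ∧
    (∀ h h', H.Adj h h' → ∃ a ∈ B h, ∃ b ∈ B h', G.Adj a b)
/-- Vertices of the refinement `(G,w,r)`: original vertices plus, for each edge `e = xy` of `G`
and each end `x`, internal vertices `(x,y,i)`, `1 ≤ i ≤ ⌈w(e)/r⌉ - 1`, of the path `P_{e,x}`. -/
abbrev SubVert {V : Type} (G : SimpleGraph V) (w : Sym2 V → ℝ) (r : ℝ) : Type :=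
  V ⊕ {p : V × V × ℕ // G.Adj p.1 p.2.1 ∧ 1 ≤ p.2.2 ∧ p.2.2 ≤ ⌈w s(p.1, p.2.1) / r⌉₊ - 1}

def subRel {V : Type} (G : SimpleGraph V) (w : Sym2 V → ℝ) (r : ℝ) :
    SubVert G w r → SubVert G w r → Prop
  | Sum.inl x, Sum.inl y => G.Adj x y ∧ ⌈w s(x, y) / r⌉₊ = 1
  | Sum.inl x, Sum.inr q => (x = q.1.1 ∧ q.1.2.2 = 1) ∨
      (x = q.1.2.1 ∧ q.1.2.2 = ⌈w s(q.1.1, q.1.2.1) / r⌉₊ - 1)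
  | Sum.inr _, Sum.inl _ => False
  | Sum.inr p, Sum.inr q => p.1.1 = q.1.1 ∧ p.1.2.1 = q.1.2.1 ∧ q.1.2.2 = p.1.2.2 + 1

/-- The underlying graph of the refinement `(G,w,r)`: each edge `e = xy` is replaced by two
internally disjoint paths `P_{e,x}`, `P_{e,y}` between `x` and `y` with `⌈w(e)/r⌉` edges
(which degenerate to the single original edge when `⌈w(e)/r⌉ = 1`). -/
def subGraph {V : Type} (G : SimpleGraph V) (w : Sym2 V → ℝ) (r : ℝ) :
    SimpleGraph (SubVert G w r) :=
  SimpleGraph.fromRel (subRel G w r)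

/-- The edge weights of the refinement `(G,w,r)`: in `P_{e,x}` the edge incident with `x` has
weight `w(e) - r·(⌈w(e)/r⌉ - 1)` and all other edges have weight `r`. -/
noncomputable def subW {V : Type} (G : SimpleGraph V) (w : Sym2 V → ℝ) (r : ℝ) :
    Sym2 (SubVert G w r) → ℝ :=
  letI : DecidableEq V := Classical.decEq V
  Sym2.lift ⟨fun a b =>
    match a, b with
    | Sum.inl x, Sum.inl y => w s(x, y)
    | Sum.inl x, Sum.inr q =>
        if x = q.1.1 ∧ q.1.2.2 = 1 then
          w s(q.1.1, q.1.2.1) - r * ((⌈w s(q.1.1, q.1.2.1) / r⌉₊ - 1 : ℕ) : ℝ)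
        else r
    | Sum.inr q, Sum.inl x =>
        if x = q.1.1 ∧ q.1.2.2 = 1 then
          w s(q.1.1, q.1.2.1) - r * ((⌈w s(q.1.1, q.1.2.1) / r⌉₊ - 1 : ℕ) : ℝ)
        else r
    | Sum.inr _, Sum.inr _ => r, by
      rintro (x | p) (y | q)
      · show w s(x, y) = w s(y, x)
        rw [Sym2.eq_swap]
      · rfl
      · rfl
      · rfl⟩

/-- The power graph `(G,w)^r`, whose vertex set is the vertex set of the refinement `(G,w,r)`,
two distinct vertices being adjacent iff their distance in `(G,w,r)` is at most `r`. -/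
noncomputable def subPower {V : Type} (G : SimpleGraph V) (w : Sym2 V → ℝ) (r : ℝ) :
    SimpleGraph (SubVert G w r) :=
  powerGraph (subGraph G w r) (subW G w r) r
section aux2
variable {V : Type} {G : SimpleGraph V} {w : Sym2 V → ℝ}

lemma walkLen_nil {x : V} : walkLen w (SimpleGraph.Walk.nil : G.Walk x x) = 0 := rfl

lemma walkLen_cons {x y z : V} (h : G.Adj x y) (p : G.Walk y z) :
    walkLen w (SimpleGraph.Walk.cons h p) = w s(x, y) + walkLen w p := by
  simp [walkLen]

lemma walkLen_append {x y z : V} (p : G.Walk x y) (q : G.Walk y z) :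
    walkLen w (p.append q) = walkLen w p + walkLen w q := by
  simp [walkLen]

lemma walkLen_nonneg (hw : ∀ e ∈ G.edgeSet, 0 ≤ w e) {x y : V} (p : G.Walk x y) :
    0 ≤ walkLen w p := by
  refine List.sum_nonneg fun a ha => ?_
  obtain ⟨e, he, rfl⟩ := List.mem_map.1 ha
  exact hw e (p.edges_subset_edgeSet he)

lemma wDist_self (x : V) : wDist G w x x = 0 := by
  refine le_antisymm ?_ zero_le
  refine iInf_le_of_le ⟨SimpleGraph.Walk.nil, SimpleGraph.Walk.IsPath.nil⟩ ?_
  simp [walkLen_nil]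

lemma exists_path_le (hw : ∀ e ∈ G.edgeSet, 0 ≤ w e) {x y : V} (p : G.Walk x y) :
    ∃ q : G.Walk x y, q.IsPath ∧ walkLen w q ≤ walkLen w p := by
  induction p with
  | nil => exact ⟨.nil, SimpleGraph.Walk.IsPath.nil, le_rfl⟩
  | @cons u v y h p ih =>
    letI := Classical.decEq V
    obtain ⟨q, hq, hlen⟩ := ih
    have h2 : 0 ≤ w s(u, v) := hw _ (G.mem_edgeSet.2 h)
    rw [walkLen_cons]
    by_cases hx : u ∈ q.support
    · refine ⟨q.dropUntil u hx, hq.dropUntil hx, ?_⟩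
      have hsplit := congrArg (walkLen w) (q.take_spec hx)
      rw [walkLen_append] at hsplit
      have h1 : 0 ≤ walkLen w (q.takeUntil u hx) := walkLen_nonneg hw _
      linarith
    · exact ⟨SimpleGraph.Walk.cons h q, hq.cons hx, by rw [walkLen_cons]; linarith⟩

lemma wDist_le_walkLen (hw : ∀ e ∈ G.edgeSet, 0 ≤ w e) {x y : V} (p : G.Walk x y) :
    wDist G w x y ≤ ENNReal.ofReal (walkLen w p) := by
  obtain ⟨q, hq, hlen⟩ := exists_path_le hw p
  exact iInf_le_of_le ⟨q, hq⟩ (ENNReal.ofReal_le_ofReal hlen)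

lemma wDist_triangle (hw : ∀ e ∈ G.edgeSet, 0 ≤ w e) (x y z : V) :
    wDist G w x z ≤ wDist G w x y + wDist G w y z := by
  conv_rhs => rw [wDist, wDist, ENNReal.iInf_add]
  refine le_iInf fun p => ?_
  rw [ENNReal.add_iInf]
  refine le_iInf fun q => ?_
  calc wDist G w x z ≤ ENNReal.ofReal (walkLen w (p.1.append q.1)) :=
        wDist_le_walkLen hw _
    _ ≤ _ := by rw [walkLen_append]; exact ENNReal.ofReal_add_le

end aux2

-- minimal defs copied (for isolated testing)
section sub
variable {V : Type} {G : SimpleGraph V} {w : Sym2 V → ℝ} {r : ℝ}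

lemma subW_inl_inl (x y : V) :
    subW G w r s(Sum.inl x, Sum.inl y) = w s(x, y) := rfl

lemma subW_inr_inr (p q) :
    subW G w r s(Sum.inr p, Sum.inr q) = r := rfl

lemma subW_inl_inr_pos (x : V) (q) (hq : x = q.1.1 ∧ q.1.2.2 = 1) :
    subW G w r s(Sum.inl x, Sum.inr q)
      = w s(q.1.1, q.1.2.1) - r * ((⌈w s(q.1.1, q.1.2.1) / r⌉₊ - 1 : ℕ) : ℝ) := by
  simp only [subW, Sym2.lift_mk]
  rw [if_pos hq]

lemma subW_inl_inr_neg (x : V) (q) (hq : ¬(x = q.1.1 ∧ q.1.2.2 = 1)) :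
    subW G w r s(Sum.inl x, Sum.inr q) = r := by
  simp only [subW, Sym2.lift_mk]
  rw [if_neg hq]

lemma first_lt (hr : 0 < r) {a b : V} (hw : 0 < w s(a, b)) :
    r * ((⌈w s(a, b) / r⌉₊ - 1 : ℕ) : ℝ) < w s(a, b) := by
  have hk : 0 < ⌈w s(a, b) / r⌉₊ := Nat.ceil_pos.2 (div_pos hw hr)
  have h1 : (⌈w s(a, b) / r⌉₊ - 1 : ℕ) < ⌈w s(a, b) / r⌉₊ := Nat.sub_lt hk one_pos
  have h2 : ((⌈w s(a, b) / r⌉₊ - 1 : ℕ) : ℝ) < w s(a, b) / r := Nat.lt_ceil.1 h1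
  have := (lt_div_iff₀ hr).1 h2
  linarith

lemma subW_pos (hr : 0 < r) (hpos : ∀ e ∈ G.edgeSet, 0 < w e) :
    ∀ e ∈ (subGraph G w r).edgeSet, 0 < subW G w r e := by
  intro e he
  induction e with
  | _ a b =>
    rw [SimpleGraph.mem_edgeSet] at he
    obtain ⟨hne, hrel⟩ := he
    obtain (x | q) := a <;> obtain (y | q2) := b
    case inl.inl =>
      rw [subW_inl_inl]
      rcases hrel with h | h
      · exact hpos _ (G.mem_edgeSet.2 h.1)
      · rw [Sym2.eq_swap]; exact hpos _ (G.mem_edgeSet.2 h.1)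
    case inl.inr =>
      by_cases hc : x = q2.1.1 ∧ q2.1.2.2 = 1
      · rw [subW_inl_inr_pos x q2 hc]
        have := first_lt hr (hpos _ (G.mem_edgeSet.2 q2.2.1))
        linarith
      · rw [subW_inl_inr_neg x q2 hc]; exact hr
    case inr.inl =>
      rw [Sym2.eq_swap]
      by_cases hc : y = q.1.1 ∧ q.1.2.2 = 1
      · rw [subW_inl_inr_pos y q hc]
        have := first_lt hr (hpos _ (G.mem_edgeSet.2 q.2.1))
        linarith
      · rw [subW_inl_inr_neg y q hc]; exact hr
    case inr.inr =>
      rw [subW_inr_inr]; exact hr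

end sub

section dirA
variable {V : Type} {G : SimpleGraph V} {w : Sym2 V → ℝ} {r : ℝ}

lemma chain_walk (hr : 0 < r) {a b : V} (hadj : G.Adj a b) :
    ∀ d j (hj1 : 1 ≤ j) (hjd : j + d = ⌈w s(a, b) / r⌉₊ - 1),
    ∃ Wk : (subGraph G w r).Walk
        (Sum.inr ⟨(a, b, j), hadj, hj1, show j ≤ ⌈w s(a, b) / r⌉₊ - 1 by omega⟩) (Sum.inl b),
      walkLen (subW G w r) Wk = r * ((d : ℝ) + 1) := by
  intro d
  induction d with
  | zero =>
    intro j hj1 hjd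
    have hadj2 : (subGraph G w r).Adj
        (Sum.inr ⟨(a, b, j), hadj, hj1, show j ≤ ⌈w s(a, b) / r⌉₊ - 1 by omega⟩) (Sum.inl b) := by
      refine ⟨by simp, Or.inr (Or.inr ⟨rfl, ?_⟩)⟩
      simpa using hjd
    refine ⟨SimpleGraph.Walk.cons hadj2 SimpleGraph.Walk.nil, ?_⟩
    rw [walkLen_cons, walkLen_nil, Sym2.eq_swap,
      subW_inl_inr_neg b _ (by simp [hadj.ne'])]
    ring
  | succ d ih =>
    intro j hj1 hjd
    obtain ⟨Wk, hWk⟩ := ih (j + 1) (by omega) (by omega)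
    have hadj2 : (subGraph G w r).Adj
        (Sum.inr ⟨(a, b, j), hadj, hj1, show j ≤ ⌈w s(a, b) / r⌉₊ - 1 by omega⟩)
        (Sum.inr ⟨(a, b, j + 1), hadj, show 1 ≤ j + 1 by omega,
          show j + 1 ≤ ⌈w s(a, b) / r⌉₊ - 1 by omega⟩) := by
      refine ⟨by simp, Or.inl ⟨rfl, rfl, rfl⟩⟩
    refine ⟨SimpleGraph.Walk.cons hadj2 Wk, ?_⟩
    rw [walkLen_cons, subW_inr_inr, hWk]
    push_cast
    ring

lemma subDist_edge_le (hr : 0 < r) (hpos : ∀ e ∈ G.edgeSet, 0 < w e)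
    {a b : V} (hadj : G.Adj a b) :
    wDist (subGraph G w r) (subW G w r) (Sum.inl a) (Sum.inl b)
      ≤ ENNReal.ofReal (w s(a, b)) := by
  have hnn : ∀ e ∈ (subGraph G w r).edgeSet, 0 ≤ subW G w r e :=
    fun e he => (subW_pos hr hpos e he).le
  have hwpos : 0 < w s(a, b) := hpos _ (G.mem_edgeSet.2 hadj)
  have hk1 : 1 ≤ ⌈w s(a, b) / r⌉₊ := Nat.ceil_pos.2 (div_pos hwpos hr)
  by_cases hk2 : ⌈w s(a, b) / r⌉₊ = 1
  · have hadj2 : (subGraph G w r).Adj (Sum.inl a) (Sum.inl b) :=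
      ⟨by simp [hadj.ne], Or.inl ⟨hadj, hk2⟩⟩
    have := wDist_le_walkLen hnn (SimpleGraph.Walk.cons hadj2 SimpleGraph.Walk.nil)
    rwa [walkLen_cons, walkLen_nil, subW_inl_inl, add_zero] at this
  · have hk2' : 2 ≤ ⌈w s(a, b) / r⌉₊ := by omega
    obtain ⟨Wk, hWk⟩ := chain_walk (w := w) hr hadj (⌈w s(a, b) / r⌉₊ - 2) 1 le_rfl (by omega)
    have hadj2 : (subGraph G w r).Adj (Sum.inl a)
        (Sum.inr ⟨(a, b, 1), hadj, le_rfl, show 1 ≤ ⌈w s(a, b) / r⌉₊ - 1 by omega⟩) :=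
      ⟨by simp, Or.inl (Or.inl ⟨rfl, rfl⟩)⟩
    have hle := wDist_le_walkLen hnn (SimpleGraph.Walk.cons hadj2 Wk)
    rw [walkLen_cons, hWk, subW_inl_inr_pos a _ ⟨rfl, rfl⟩] at hle
    convert hle using 2
    have c1 : ((⌈w s(a, b) / r⌉₊ - 1 : ℕ) : ℝ) = (⌈w s(a, b) / r⌉₊ : ℝ) - 1 := by
      push_cast [Nat.cast_sub hk1]; ring
    have c2 : ((⌈w s(a, b) / r⌉₊ - 2 : ℕ) : ℝ) = (⌈w s(a, b) / r⌉₊ : ℝ) - 2 := by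
      push_cast [Nat.cast_sub hk2']; ring
    rw [c1, c2]
    ring

lemma subDist_le_wDist (hr : 0 < r) (hpos : ∀ e ∈ G.edgeSet, 0 < w e) (x y : V) :
    wDist (subGraph G w r) (subW G w r) (Sum.inl x) (Sum.inl y) ≤ wDist G w x y := by
  have hnn : ∀ e ∈ G.edgeSet, 0 ≤ w e := fun e he => (hpos e he).le
  have hsubnn : ∀ e ∈ (subGraph G w r).edgeSet, 0 ≤ subW G w r e :=
    fun e he => (subW_pos hr hpos e he).le
  have claim : ∀ (z : V) (p : G.Walk z y),
      wDist (subGraph G w r) (subW G w r) (Sum.inl z) (Sum.inl y)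
        ≤ ENNReal.ofReal (walkLen w p) := by
    intro z p
    induction p with
    | nil => rw [wDist_self, walkLen_nil]; simp
    | @cons u v y h p ih =>
      rw [walkLen_cons, ENNReal.ofReal_add (hnn _ (G.mem_edgeSet.2 h)) (walkLen_nonneg hnn p)]
      calc wDist (subGraph G w r) (subW G w r) (Sum.inl u) (Sum.inl y)
          ≤ wDist (subGraph G w r) (subW G w r) (Sum.inl u) (Sum.inl v)
            + wDist (subGraph G w r) (subW G w r) (Sum.inl v) (Sum.inl y) :=
            wDist_triangle hsubnn _ _ _
        _ ≤ _ := add_le_add (subDist_edge_le hr hpos h) ih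
  exact le_iInf fun p => claim x p.1
end dirA

section dirB
variable {V : Type} {G : SimpleGraph V} {w : Sym2 V → ℝ} {r : ℝ}

lemma wDist_le_edge (hnn : ∀ e ∈ G.edgeSet, 0 ≤ w e) {x y : V} (hadj : G.Adj x y) :
    wDist G w x y ≤ ENNReal.ofReal (w s(x, y)) := by
  have := wDist_le_walkLen hnn (SimpleGraph.Walk.cons hadj SimpleGraph.Walk.nil)
  rwa [walkLen_cons, walkLen_nil, add_zero] at this

/-- Potential: distance to `Y` in `G` seen from a vertex of the refinement. -/
noncomputable def pot {V : Type} (G : SimpleGraph V) (w : Sym2 V → ℝ) (r : ℝ) (Y : V) :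
    SubVert G w r → ℝ≥0∞
  | Sum.inl x => wDist G w x Y
  | Sum.inr q =>
      min (ENNReal.ofReal (w s(q.1.1, q.1.2.1)
            - r * ((⌈w s(q.1.1, q.1.2.1) / r⌉₊ - 1 : ℕ) : ℝ)
            + r * ((q.1.2.2 - 1 : ℕ) : ℝ)) + wDist G w q.1.1 Y)
          (ENNReal.ofReal (r * ((⌈w s(q.1.1, q.1.2.1) / r⌉₊ - q.1.2.2 : ℕ) : ℝ))
            + wDist G w q.1.2.1 Y)

lemma min_step (dA dB : ℝ≥0∞) (c : ℝ) (hr : 0 ≤ r) (j k : ℕ) (h1 : 1 ≤ j) (h2 : j + 1 ≤ k) :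
    (min (ENNReal.ofReal (c + r * ((j - 1 : ℕ) : ℝ)) + dA)
        (ENNReal.ofReal (r * ((k - j : ℕ) : ℝ)) + dB)
      ≤ ENNReal.ofReal r +
        min (ENNReal.ofReal (c + r * ((j + 1 - 1 : ℕ) : ℝ)) + dA)
            (ENNReal.ofReal (r * ((k - (j + 1) : ℕ) : ℝ)) + dB)) ∧
    (min (ENNReal.ofReal (c + r * ((j + 1 - 1 : ℕ) : ℝ)) + dA)
        (ENNReal.ofReal (r * ((k - (j + 1) : ℕ) : ℝ)) + dB)
      ≤ ENNReal.ofReal r +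
        min (ENNReal.ofReal (c + r * ((j - 1 : ℕ) : ℝ)) + dA)
            (ENNReal.ofReal (r * ((k - j : ℕ) : ℝ)) + dB)) := by
  have e1 : ((j - 1 : ℕ) : ℝ) = (j : ℝ) - 1 := by
    rw [Nat.cast_sub h1]; norm_num
  have e2 : ((j + 1 - 1 : ℕ) : ℝ) = (j : ℝ) := by norm_num
  have e3 : ((k - j : ℕ) : ℝ) = (k : ℝ) - j := by
    rw [Nat.cast_sub (by omega)]
  have e4 : ((k - (j + 1) : ℕ) : ℝ) = (k : ℝ) - j - 1 := by
    rw [Nat.cast_sub (by omega)]; push_cast; ring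
  constructor
  · rw [← min_add_add_left]
    refine le_min ((min_le_left _ _).trans ?_) ((min_le_right _ _).trans ?_)
    · refine le_add_left (add_le_add (ENNReal.ofReal_le_ofReal ?_) le_rfl)
      rw [e1, e2]; nlinarith
    · rw [← add_assoc]
      refine add_le_add ?_ le_rfl
      have : r * ((k - j : ℕ) : ℝ) = r + r * ((k - (j + 1) : ℕ) : ℝ) := by
        rw [e3, e4]; ring
      rw [this]; exact ENNReal.ofReal_add_le
  · rw [← min_add_add_left]
    refine le_min ((min_le_left _ _).trans ?_) ((min_le_right _ _).trans ?_)
    · rw [← add_assoc]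
      refine add_le_add ?_ le_rfl
      have : c + r * ((j + 1 - 1 : ℕ) : ℝ) = r + (c + r * ((j - 1 : ℕ) : ℝ)) := by
        rw [e1, e2]; ring
      rw [this]; exact ENNReal.ofReal_add_le
    · refine le_add_left (add_le_add (ENNReal.ofReal_le_ofReal ?_) le_rfl)
      rw [e3, e4]; nlinarith

lemma subW_inr_inl (x : V) (q) :
    subW G w r s(Sum.inr q, Sum.inl x) = subW G w r s(Sum.inl x, Sum.inr q) := by
  rw [Sym2.eq_swap]

@[simp] lemma pot_inl {Y x : V} : pot G w r Y (Sum.inl x) = wDist G w x Y := rfl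

lemma pot_inr {Y : V} (q) : pot G w r Y (Sum.inr q)
    = min (ENNReal.ofReal (w s(q.1.1, q.1.2.1)
            - r * ((⌈w s(q.1.1, q.1.2.1) / r⌉₊ - 1 : ℕ) : ℝ)
            + r * ((q.1.2.2 - 1 : ℕ) : ℝ)) + wDist G w q.1.1 Y)
          (ENNReal.ofReal (r * ((⌈w s(q.1.1, q.1.2.1) / r⌉₊ - q.1.2.2 : ℕ) : ℝ))
            + wDist G w q.1.2.1 Y) := rfl

lemma pot_edge (hr : 0 < r) (hpos : ∀ e ∈ G.edgeSet, 0 < w e) (Y : V)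
    {s t : SubVert G w r} (h : (subGraph G w r).Adj s t) :
    pot G w r Y s ≤ ENNReal.ofReal (subW G w r s(s, t)) + pot G w r Y t := by
  have hnn : ∀ e ∈ G.edgeSet, 0 ≤ w e := fun e he => (hpos e he).le
  obtain ⟨hne, hrel⟩ := h
  obtain (x | ⟨⟨a, b, j⟩, hq⟩) := s <;> obtain (y | ⟨⟨a', b', j'⟩, hq'⟩) := t
  · -- inl, inl
    have hadj : G.Adj x y := by
      rcases hrel with h | h
      · exact h.1
      · exact h.1.symm
    rw [subW_inl_inl]
    exact (wDist_triangle hnn x y Y).trans (add_le_add (wDist_le_edge hnn hadj) le_rfl)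
  · -- inl, inr
    have hadj : G.Adj a' b' := hq'.1
    have hj1 : 1 ≤ j' := hq'.2.1
    have hj2 : j' ≤ ⌈w s(a', b') / r⌉₊ - 1 := hq'.2.2
    have hk1 : 1 ≤ ⌈w s(a', b') / r⌉₊ := by omega
    rcases hrel with hl | hl
    swap
    · exact hl.elim
    rw [pot_inl, pot_inr]
    have hl' : (x = a' ∧ j' = 1) ∨ (x = b' ∧ j' = ⌈w s(a', b') / r⌉₊ - 1) := hl
    rcases hl' with ⟨rfl, rfl⟩ | ⟨rfl, hj⟩
    · rw [subW_inl_inr_pos x ⟨(x, b', 1), hq'⟩ ⟨rfl, rfl⟩]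
      rw [← min_add_add_left]
      refine le_min (le_add_left (le_add_left le_rfl)) ?_
      show wDist G w x Y ≤ _
      calc wDist G w x Y ≤ wDist G w x b' + wDist G w b' Y := wDist_triangle hnn _ _ _
        _ ≤ ENNReal.ofReal (w s(x, b')) + wDist G w b' Y :=
            add_le_add (wDist_le_edge hnn hadj) le_rfl
        _ ≤ _ := by
            rw [← add_assoc]
            refine add_le_add ?_ le_rfl
            have he : w s(x, b') = (w s(x, b')
                - r * ((⌈w s(x, b') / r⌉₊ - 1 : ℕ) : ℝ))
                + r * ((⌈w s(x, b') / r⌉₊ - 1 : ℕ) : ℝ) := by ring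
            conv_lhs => rw [he]
            exact ENNReal.ofReal_add_le
    · rw [subW_inl_inr_neg x ⟨(a', x, j'), hq'⟩ (fun hc => hadj.ne' hc.1)]
      rw [← min_add_add_left]
      refine le_min ?_ (le_add_left (le_add_left le_rfl))
      show wDist G w x Y ≤ _
      calc wDist G w x Y ≤ wDist G w x a' + wDist G w a' Y := wDist_triangle hnn _ _ _
        _ = wDist G w a' x + wDist G w a' Y := by rw [wDist_comm G w x a']
        _ ≤ ENNReal.ofReal (w s(a', x)) + wDist G w a' Y :=
            add_le_add (wDist_le_edge hnn hadj) le_rfl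
        _ ≤ _ := by
            rw [← add_assoc]
            refine add_le_add ?_ le_rfl
            have he : w s(a', x) = r + (w s(a', x)
                - r * ((⌈w s(a', x) / r⌉₊ - 1 : ℕ) : ℝ)
                + r * ((j' - 1 : ℕ) : ℝ)) := by
              subst hj
              rw [Nat.cast_sub hk1, Nat.cast_sub (by omega), Nat.cast_sub (by omega)]
              push_cast
              ring
            conv_lhs => rw [he]
            exact ENNReal.ofReal_add_le
  · -- inr, inl
    have hadj : G.Adj a b := hq.1
    have hj1 : 1 ≤ j := hq.2.1
    have hj2 : j ≤ ⌈w s(a, b) / r⌉₊ - 1 := hq.2.2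
    rcases hrel with hl | hl
    · exact hl.elim
    rw [pot_inl, pot_inr, subW_inr_inl]
    have hl' : (y = a ∧ j = 1) ∨ (y = b ∧ j = ⌈w s(a, b) / r⌉₊ - 1) := hl
    rcases hl' with ⟨rfl, rfl⟩ | ⟨rfl, hj⟩
    · rw [subW_inl_inr_pos y ⟨(y, b, 1), hq⟩ ⟨rfl, rfl⟩]
      refine (min_le_left _ _).trans (add_le_add (ENNReal.ofReal_le_ofReal ?_) le_rfl)
      norm_num
    · rw [subW_inl_inr_neg y ⟨(a, y, j), hq⟩ (fun hc => hadj.ne' hc.1)]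
      refine (min_le_right _ _).trans (add_le_add (ENNReal.ofReal_le_ofReal ?_) le_rfl)
      have he : ⌈w s(a, y) / r⌉₊ - j = 1 := by omega
      rw [he]
      norm_num
  · -- inr, inr
    rw [subW_inr_inr, pot_inr, pot_inr]
    have hadj : G.Adj a b := hq.1
    have hj1 : 1 ≤ j := hq.2.1
    have hj2 : j ≤ ⌈w s(a, b) / r⌉₊ - 1 := hq.2.2
    have hadj' : G.Adj a' b' := hq'.1
    have hj1' : 1 ≤ j' := hq'.2.1
    have hj2' : j' ≤ ⌈w s(a', b') / r⌉₊ - 1 := hq'.2.2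
    have hrel' : (a = a' ∧ b = b' ∧ j' = j + 1) ∨ (a' = a ∧ b' = b ∧ j = j' + 1) := hrel
    rcases hrel' with ⟨rfl, rfl, rfl⟩ | ⟨rfl, rfl, rfl⟩
    · exact (min_step (wDist G w a Y) (wDist G w b Y)
        (w s(a, b) - r * ((⌈w s(a, b) / r⌉₊ - 1 : ℕ) : ℝ)) hr.le j
        ⌈w s(a, b) / r⌉₊ hj1 (by omega)).1
    · exact (min_step (wDist G w a' Y) (wDist G w b' Y)
        (w s(a', b') - r * ((⌈w s(a', b') / r⌉₊ - 1 : ℕ) : ℝ)) hr.le j'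
        ⌈w s(a', b') / r⌉₊ hj1' (by omega)).2

lemma pot_le_walkLen (hr : 0 < r) (hpos : ∀ e ∈ G.edgeSet, 0 < w e) (Y : V)
    {s t : SubVert G w r} (Wk : (subGraph G w r).Walk s t) :
    pot G w r Y s ≤ ENNReal.ofReal (walkLen (subW G w r) Wk) + pot G w r Y t := by
  have hsubnn : ∀ e ∈ (subGraph G w r).edgeSet, 0 ≤ subW G w r e :=
    fun e he => (subW_pos hr hpos e he).le
  induction Wk with
  | nil => simp [walkLen_nil]
  | cons h p ih =>
    rw [walkLen_cons,
      ENNReal.ofReal_add (hsubnn _ ((subGraph _ _ _).mem_edgeSet.2 h)) (walkLen_nonneg hsubnn p),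
      add_assoc]
    exact (pot_edge hr hpos Y h).trans (add_le_add le_rfl ih)

lemma wDist_le_subDist (hr : 0 < r) (hpos : ∀ e ∈ G.edgeSet, 0 < w e) (x y : V) :
    wDist G w x y ≤ wDist (subGraph G w r) (subW G w r) (Sum.inl x) (Sum.inl y) := by
  refine le_iInf fun p => ?_
  have h := pot_le_walkLen hr hpos y p.1 (t := Sum.inl y)
  have h2 : pot G w r y (Sum.inl y) = 0 := wDist_self y
  rw [h2, add_zero] at h
  exact h

end dirB

section main
variable {V : Type} {G : SimpleGraph V} {w : Sym2 V → ℝ} {r : ℝ}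

lemma reach_color {A : Set V} {m : ℕ} {c : V → Fin m} {K0 : SimpleGraph V} {a b : V}
    (h : (colorGraph K0 A c).Reachable a b) : c a = c b := by
  obtain ⟨p⟩ := h
  induction p with
  | nil => rfl
  | cons h p ih => exact h.2.2.2.trans ih

lemma hop_walk {L : SimpleGraph V} {x y : V} {N : ℕ}
    (h : hopDist L x y ≤ ENNReal.ofReal (N : ℝ)) : ∃ q : L.Walk x y, q.length ≤ N := by
  by_contra hcon
  push_neg at hcon
  have h1 : ((N : ℝ≥0∞) + 1) ≤ hopDist L x y := by
    refine le_iInf fun q => ?_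
    have := hcon q
    exact_mod_cast this
  rw [ENNReal.ofReal_natCast] at h
  have h2 : ((N : ℝ≥0∞) + 1) ≤ (N : ℝ≥0∞) := h1.trans h
  have h3 : (N + 1 : ℕ) ≤ N := by exact_mod_cast h2
  omega

lemma power_walk_bound (hr : 0 < r) (hpos : ∀ e ∈ G.edgeSet, 0 < w e)
    {a b : SubVert G w r} (q : (subPower G w r).Walk a b) :
    wDist (subGraph G w r) (subW G w r) a b ≤ ENNReal.ofReal (r * q.length) := by
  have hsubnn : ∀ e ∈ (subGraph G w r).edgeSet, 0 ≤ subW G w r e :=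
    fun e he => (subW_pos hr hpos e he).le
  induction q with
  | nil => simp [wDist_self]
  | @cons u v y h p ih =>
    have h2 := h.2
    calc wDist (subGraph G w r) (subW G w r) u y
        ≤ wDist (subGraph G w r) (subW G w r) u v
          + wDist (subGraph G w r) (subW G w r) v y := wDist_triangle hsubnn _ _ _
      _ ≤ ENNReal.ofReal r + ENNReal.ofReal (r * p.length) := add_le_add h2 ih
      _ = ENNReal.ofReal (r + r * p.length) :=
          (ENNReal.ofReal_add hr.le (mul_nonneg hr.le (Nat.cast_nonneg _))).symm
      _ = _ := by
          rw [SimpleGraph.Walk.length_cons]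
          push_cast
          ring_nf

end main

/-- Theorem (Lemma `weighted_wd_to_ad`): if `(G,φ)^r` has an `m`-colouring with weak diameter in
`(G,φ)^r` at most `N`, then there are collections `X₁,…,X_m` of subsets of `V(G)` covering
`V(G)`, each of whose members has weak diameter in `(G,φ)` at most `r·N`, with distinct members
of the same collection at distance greater than `r` in `(G,φ)`. -/
theorem weighted_wd_to_ad (W : WGraph) (r : ℝ) (hr : 0 < r) (m N : ℕ)
    (hm : 0 < m) (hN : 0 < N) (c : SubVert W.G W.w r → Fin m)
    (hc : HasWeakDiamLE (subPower W.G W.w r) Set.univ (subPower W.G W.w r) c (N : ℝ)) :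
    ∃ Xs : Fin m → Set (Set W.V),
      (∀ v : W.V, ∃ i, ∃ X ∈ Xs i, v ∈ X) ∧
      (∀ i, ∀ X ∈ Xs i, ∀ x ∈ X, ∀ y ∈ X,
        wDist W.G W.w x y ≤ ENNReal.ofReal (r * N)) ∧
      (∀ i, ∀ X ∈ Xs i, ∀ X' ∈ Xs i, X ≠ X' → ∀ x ∈ X, ∀ x' ∈ X',
        ENNReal.ofReal r < wDist W.G W.w x x') := by
  classical
  set K := colorGraph (subPower W.G W.w r) Set.univ c with hK
  refine ⟨fun i => {S | ∃ v : W.V, c (Sum.inl v) = i ∧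
    S = {u : W.V | K.Reachable (Sum.inl u) (Sum.inl v)}}, ?_, ?_, ?_⟩
  · intro v
    exact ⟨c (Sum.inl v), {u : W.V | K.Reachable (Sum.inl u) (Sum.inl v)},
      ⟨v, rfl, rfl⟩, SimpleGraph.Reachable.refl _⟩
  · rintro i X ⟨v, hv, rfl⟩ x hx y hy
    have hxy : K.Reachable (Sum.inl x) (Sum.inl y) := hx.trans hy.symm
    have hhop := hc _ trivial _ trivial hxy
    obtain ⟨q, hq⟩ := hop_walk hhop
    have h1 := power_walk_bound hr W.pos q
    have h2 := wDist_le_subDist hr W.pos x y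
    refine (h2.trans h1).trans (ENNReal.ofReal_le_ofReal ?_)
    exact mul_le_mul_of_nonneg_left (Nat.cast_le.2 hq) hr.le
  · rintro i X ⟨v, hv, rfl⟩ X' ⟨v', hv', rfl⟩ hne x hx x' hx'
    by_contra hcon
    push_neg at hcon
    have hsub : wDist (subGraph W.G W.w r) (subW W.G W.w r) (Sum.inl x) (Sum.inl x')
        ≤ ENNReal.ofReal r := (subDist_le_wDist hr W.pos x x').trans hcon
    have hreach : K.Reachable (Sum.inl x) (Sum.inl x') := by
      by_cases hxx : (Sum.inl x : SubVert W.G W.w r) = Sum.inl x'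
      · rw [hxx]
      · have hcol : c (Sum.inl x) = c (Sum.inl x') := by
          have e1 : c (Sum.inl x) = c (Sum.inl v) := reach_color hx
          have e2 : c (Sum.inl x') = c (Sum.inl v') := reach_color hx'
          rw [e1, e2, hv, hv']
        exact (SimpleGraph.Adj.reachable ⟨⟨hxx, hsub⟩, trivial, trivial, hcol⟩)
    have hvv' : K.Reachable (Sum.inl v) (Sum.inl v') :=
      (hx.symm.trans hreach).trans hx'
    refine hne ?_
    ext u
    exact ⟨fun h => h.trans hvv', fun h => h.trans hvv'.symm⟩
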